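/- Let S be an even lattice of signature (2_+, n_−) with n ≥ 1. For every integer N > 0 there exists P such that for every prime p ≥ P and every subgroup S' ≤ S with S/S' ≅ ℤ/pℤ, the index of O(S')* in O(S)* is strictly greater than N. Here O(S')* is viewed as a subgroup of O(S)*: every isometry of S ⊗ ℚ preserving S' and acting trivially on A_{S'} preserves S and acts trivially on A_S. -/

import Mathlib

/-- `v` pairs integrally with every element of the lattice `L`. -/
def InDual {V : Type*} [AddCommGroup V] [Module ℚ V]
    (B : LinearMap.BilinForm ℚ V) (L : Submodule ℤ V) (v : V) : Prop :=
  ∀ y ∈ L, ∃ n : ℤ, B v y = (n : ℚ)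

/-- `g` belongs to the stable orthogonal group `O(M)*` of a full lattice `M`: it is an
isometry of the ambient space preserving `M` and acting trivially on `A_M = M^∨/M`. -/
def MemOStar {V : Type*} [AddCommGroup V] [Module ℚ V]
    (B : LinearMap.BilinForm ℚ V) (M : Submodule ℤ V) (g : V ≃ₗ[ℚ] V) : Prop :=
  (∀ x y : V, B (g x) (g y) = B x y) ∧
  (∀ x : V, x ∈ M ↔ g x ∈ M) ∧
  (∀ v : V, InDual B M v → g v - v ∈ M)

/-- The rational quadratic space `(V, B)` has signature `(pos, neg)`: it admits an
orthogonal basis with exactly `pos` vectors of positive norm and `neg` of negative norm. -/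
def HasSignature {V : Type*} [AddCommGroup V] [Module ℚ V]
    (B : LinearMap.BilinForm ℚ V) (pos neg : ℕ) : Prop :=
  ∃ b : Module.Basis (Fin (pos + neg)) ℚ V,
    (∀ i j, i ≠ j → B (b i) (b j) = 0) ∧
    (Finset.univ.filter fun i => 0 < B (b i) (b i)).card = pos ∧
    (Finset.univ.filter fun i => B (b i) (b i) < 0).card = neg

section S9
variable {V : Type*} [AddCommGroup V] [Module ℚ V]

/-- scale any vector into a full lattice -/
lemma S9_exists_zsmul_mem (S : Submodule ℤ V)
    (hSspan : Submodule.span ℚ (S : Set V) = ⊤) (v : V) :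
    ∃ k : ℤ, k ≠ 0 ∧ (k : ℚ) • v ∈ S := by
  have hv : v ∈ Submodule.span ℚ (S : Set V) := by rw [hSspan]; trivial
  induction hv using Submodule.span_induction with
  | mem x hx => exact ⟨1, one_ne_zero, by simpa using hx⟩
  | zero => exact ⟨1, one_ne_zero, by simp⟩
  | add x y _ _ hx hy =>
      obtain ⟨k1, hk1, h1⟩ := hx
      obtain ⟨k2, hk2, h2⟩ := hy
      refine ⟨k1 * k2, mul_ne_zero hk1 hk2, ?_⟩
      have : ((k1 * k2 : ℤ) : ℚ) • (x + y)
          = k2 • ((k1:ℚ) • x) + k1 • ((k2:ℚ) • y) := by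
        rw [← Int.cast_smul_eq_zsmul ℚ k2, ← Int.cast_smul_eq_zsmul ℚ k1]
        push_cast
        module
      rw [this]
      exact S.add_mem (S.smul_mem _ h1) (S.smul_mem _ h2)
  | smul q x _ hx =>
      obtain ⟨k, hk, h⟩ := hx
      refine ⟨k * q.den, mul_ne_zero hk (by exact_mod_cast q.den_nz), ?_⟩
      have : ((k * q.den : ℤ) : ℚ) • (q • x) = q.num • ((k:ℚ) • x) := by
        rw [← Int.cast_smul_eq_zsmul ℚ q.num]
        rw [smul_smul, smul_smul]
        congr 1
        push_cast
        rw [mul_assoc, Rat.den_mul_eq_num]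
        ring
      rw [this]
      exact S.smul_mem _ h

lemma S9_intCast_ne (p : ℕ) (k : ℤ) (hk : k ≠ 0) (h : |k| < (p : ℤ)) :
    (k : ZMod p) ≠ 0 := by
  intro h0
  rw [ZMod.intCast_zmod_eq_zero_iff_dvd] at h0
  have := Int.le_of_dvd (abs_pos.mpr hk) ((dvd_abs _ _).mpr h0)
  omega

variable (B : LinearMap.BilinForm ℚ V)

/-- Eichler transvection -/
noncomputable def S9Efun (e a : V) : V →ₗ[ℚ] V :=
  LinearMap.id + (B a).smulRight e - (B e).smulRight a
    - (B a a / 2) • ((B e).smulRight e)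

lemma S9Efun_apply (e a x : V) :
    S9Efun B e a x = x + (B a x) • e - (B e x) • a - (B a a / 2 * B e x) • e := by
  simp [S9Efun, LinearMap.smulRight_apply, mul_smul]

lemma S9Efun_zero (e : V) : S9Efun B e 0 = LinearMap.id := by
  ext x
  simp [S9Efun_apply]

lemma S9Ecomp (e a b : V) (hee : B e e = 0) (hea : B e a = 0) (hae : B a e = 0)
    (heb : B e b = 0) (hbe : B b e = 0) (hab : B a b = B b a) (x : V) :
    S9Efun B e a (S9Efun B e b x) = S9Efun B e (a + b) x := by
  simp only [S9Efun_apply, map_add, map_sub, map_smul, LinearMap.add_apply,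
    LinearMap.sub_apply, LinearMap.smul_apply, smul_eq_mul]
  simp only [hee, hea, hae, heb, hbe, hab]
  match_scalars <;> ring

lemma S9Eiso (hBsymm : ∀ x y : V, B x y = B y x) (e a : V)
    (hee : B e e = 0) (hea : B e a = 0) (x y : V) :
    B (S9Efun B e a x) (S9Efun B e a y) = B x y := by
  have hae : B a e = 0 := (hBsymm a e).trans hea
  simp only [S9Efun_apply, map_add, map_sub, map_smul, LinearMap.add_apply,
    LinearMap.sub_apply, LinearMap.smul_apply, smul_eq_mul]
  simp only [hBsymm x e, hBsymm x a, hBsymm y e, hBsymm y a, hee, hea, hae]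
  ring

end S9
section S9b
variable {V : Type*} [AddCommGroup V] [Module ℚ V] (B : LinearMap.BilinForm ℚ V)

noncomputable def S9Eeq (e a : V) (hee : B e e = 0) (hea : B e a = 0)
    (hae : B a e = 0) : V ≃ₗ[ℚ] V :=
  LinearEquiv.ofLinear (S9Efun B e a) (S9Efun B e (-a))
    (by
      ext x
      simp only [LinearMap.comp_apply, LinearMap.id_apply]
      rw [S9Ecomp B e a (-a) hee hea hae (by simp [hea]) (by simp [hae])
        (by simp only [map_neg, LinearMap.neg_apply])]
      simp [S9Efun_zero])
    (by
      ext x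
      simp only [LinearMap.comp_apply, LinearMap.id_apply]
      rw [S9Ecomp B e (-a) a hee (by simp [hea]) (by simp [hae]) hea hae
        (by simp only [map_neg, LinearMap.neg_apply])]
      simp [S9Efun_zero])

lemma S9E_sub_mem (hBsymm : ∀ x y : V, B x y = B y x) (S : Submodule ℤ V)
    (hSeven : ∀ x ∈ S, ∃ n : ℤ, B x x = 2 * (n : ℚ))
    (e a : V) (he : e ∈ S) (ha : a ∈ S) (v : V) (hv : InDual B S v) :
    S9Efun B e a v - v ∈ S := by
  obtain ⟨t, ht⟩ := hv a ha
  obtain ⟨s, hs⟩ := hv e he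
  obtain ⟨q, hq⟩ := hSeven a ha
  have h1 : B a v = (t : ℚ) := (hBsymm a v).trans ht
  have h2 : B e v = (s : ℚ) := (hBsymm e v).trans hs
  rw [S9Efun_apply, h1, h2, hq]
  have key : v + (t:ℚ) • e - (s:ℚ) • a - (2 * (q:ℚ) / 2 * (s:ℚ)) • e - v
      = (t:ℚ) • e - (s:ℚ) • a - ((q * s : ℤ) : ℚ) • e := by
    push_cast
    match_scalars <;> ring
  rw [key]
  refine Submodule.sub_mem _ (Submodule.sub_mem _ ?_ ?_) ?_ <;>
    rw [Int.cast_smul_eq_zsmul] <;> exact S.smul_mem _ (by assumption)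

lemma S9E_mem_S (hBsymm : ∀ x y : V, B x y = B y x) (S : Submodule ℤ V)
    (hSint : ∀ x ∈ S, ∀ y ∈ S, ∃ n : ℤ, B x y = (n : ℚ))
    (hSeven : ∀ x ∈ S, ∃ n : ℤ, B x x = 2 * (n : ℚ))
    (e a : V) (he : e ∈ S) (ha : a ∈ S) (x : V) (hx : x ∈ S) :
    S9Efun B e a x ∈ S := by
  have hd : InDual B S x := fun y hy => hSint x hx y hy
  have := S9E_sub_mem B hBsymm S hSeven e a he ha x hd
  have h2 : S9Efun B e a x = x + (S9Efun B e a x - x) := by abel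
  rw [h2]
  exact S.add_mem hx this

lemma S9E_memOStar (hBsymm : ∀ x y : V, B x y = B y x) (S : Submodule ℤ V)
    (hSint : ∀ x ∈ S, ∀ y ∈ S, ∃ n : ℤ, B x y = (n : ℚ))
    (hSeven : ∀ x ∈ S, ∃ n : ℤ, B x x = 2 * (n : ℚ))
    (e a : V) (he : e ∈ S) (ha : a ∈ S)
    (hee : B e e = 0) (hea : B e a = 0) (hae : B a e = 0) :
    MemOStar B S (S9Eeq B e a hee hea hae) := by
  refine ⟨fun x y => S9Eiso B hBsymm e a hee hea x y, fun x => ⟨?_, ?_⟩, ?_⟩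
  · intro hx
    exact S9E_mem_S B hBsymm S hSint hSeven e a he ha x hx
  · intro hx
    have hx' := S9E_mem_S B hBsymm S hSint hSeven e (-a) he (S.neg_mem ha) _ hx
    have heq : S9Efun B e (-a) (S9Eeq B e a hee hea hae x) = x := by
      show S9Efun B e (-a) (S9Efun B e a x) = x
      rw [S9Ecomp B e (-a) a hee (by simp [hea]) (by simp [hae]) hea hae
        (by simp only [map_neg, LinearMap.neg_apply])]
      simp [S9Efun_zero]
    rwa [heq] at hx'
  · intro v hv
    exact S9E_sub_mem B hBsymm S hSeven e a he ha v hv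

lemma S9_eichler_main (hBsymm : ∀ x y : V, B x y = B y x)
    (S : Submodule ℤ V)
    (hSint : ∀ x ∈ S, ∀ y ∈ S, ∃ n : ℤ, B x y = (n : ℚ))
    (hSeven : ∀ x ∈ S, ∃ n : ℤ, B x x = 2 * (n : ℚ))
    (S' : Submodule ℤ V) (hS'S : S' ≤ S)
    (p : ℕ) (φ : ↥S →+ ZMod p)
    (hker : ∀ x : ↥S, φ x = 0 ↔ (x : V) ∈ S')
    (N : ℕ)
    (e a v : V) (he : e ∈ S) (ha : a ∈ S) (hv : v ∈ S)
    (hee : B e e = 0) (hea : B e a = 0)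
    (t' n' q' : ℤ) (ht' : B a v = (t' : ℚ)) (hn' : B e v = (n' : ℚ))
    (hq' : B a a = 2 * (q' : ℚ))
    (hval : ∀ m : ℤ, m ≠ 0 → |m| ≤ (N : ℤ) →
      ((m * t' - m ^ 2 * q' * n' : ℤ) : ZMod p) * φ ⟨e, he⟩
        - ((m * n' : ℤ) : ZMod p) * φ ⟨a, ha⟩ ≠ 0) :
    ∃ g : Fin (N + 1) → (V ≃ₗ[ℚ] V),
      (∀ i, MemOStar B S (g i)) ∧
      ∀ i j, i ≠ j → ¬ MemOStar B S' ((g i)⁻¹ * (g j)) := by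
  have hae : B a e = 0 := (hBsymm a e).trans hea
  have ham : ∀ m : ℤ, ((m : ℚ) • a) ∈ S := fun m => by
    rw [Int.cast_smul_eq_zsmul]; exact S.smul_mem _ ha
  have heam : ∀ c : ℚ, B e (c • a) = 0 := fun c => by simp [hea]
  have hame : ∀ c : ℚ, B (c • a) e = 0 := fun c => by
    simp only [map_smul, LinearMap.smul_apply, smul_eq_mul, hae, mul_zero]
  refine ⟨fun i => S9Eeq B e (((i : ℕ) : ℚ) • a) hee (heam _) (hame _),
    fun i => ?_, ?_⟩
  · refine S9E_memOStar B hBsymm S hSint hSeven e _ he ?_ hee (heam _) (hame _)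
    exact_mod_cast ham ((i : ℕ) : ℤ)
  · intro i j hij hmem
    set m : ℤ := (j : ℤ) - (i : ℤ) with hm
    have hm0 : m ≠ 0 := by have := Fin.val_ne_of_ne hij; omega
    have hmN : |m| ≤ (N : ℤ) := by
      rw [abs_le]; have hi := i.isLt; have hj := j.isLt; omega
    have hδ : ∀ x : V,
        ((S9Eeq B e (((i:ℕ):ℚ) • a) hee (heam _) (hame _))⁻¹ *
          (S9Eeq B e (((j:ℕ):ℚ) • a) hee (heam _) (hame _))) x
          = S9Efun B e ((m : ℚ) • a) x := by
      intro x
      show S9Efun B e (-(((i:ℕ):ℚ) • a)) (S9Efun B e (((j:ℕ):ℚ) • a) x) = _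
      rw [S9Ecomp B e (-(((i:ℕ):ℚ) • a)) (((j:ℕ):ℚ) • a) hee
        (by simpa using heam ((i:ℕ):ℚ)) (by simpa using hame ((i:ℕ):ℚ))
        (heam _) (hame _)
        (by simp only [map_neg, map_smul, LinearMap.neg_apply, LinearMap.smul_apply,
              smul_eq_mul]; ring)]
      have harg : -((((i:ℕ)):ℚ) • a) + (((j:ℕ)):ℚ) • a = (m:ℚ) • a := by
        push_cast [hm]; module
      rw [harg]
    obtain ⟨_, _, h3⟩ := hmem
    have hvd : InDual B S' v := fun y hy => hSint v hv y (hS'S hy)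
    have hsub : S9Efun B e ((m : ℚ) • a) v - v ∈ S' := by
      rw [← hδ v]; exact h3 v hvd
    have h1 : B ((m:ℚ) • a) v = (m : ℚ) * (t' : ℚ) := by
      simp only [map_smul, LinearMap.smul_apply, smul_eq_mul, ht']
    have h3' : B ((m:ℚ) • a) ((m:ℚ) • a) = (m:ℚ)^2 * (2 * (q':ℚ)) := by
      simp only [map_smul, LinearMap.smul_apply, smul_eq_mul, hq']; ring
    have hcomp : S9Efun B e ((m:ℚ) • a) v - v
        = ((m * t' - m ^ 2 * q' * n' : ℤ) : ℚ) • e + ((-(m * n') : ℤ) : ℚ) • a := by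
      rw [S9Efun_apply, h1, hn', h3']
      push_cast
      match_scalars <;> ring
    have hmemS : S9Efun B e ((m:ℚ) • a) v - v ∈ S := by
      rw [hcomp]
      refine S.add_mem ?_ ?_ <;> rw [Int.cast_smul_eq_zsmul] <;>
        exact S.smul_mem _ (by assumption)
    have hzero : φ ⟨_, hmemS⟩ = 0 := (hker _).mpr hsub
    have hrepr : (⟨S9Efun B e ((m:ℚ) • a) v - v, hmemS⟩ : ↥S)
        = (m * t' - m ^ 2 * q' * n') • (⟨e, he⟩ : ↥S) + (-(m * n')) • ⟨a, ha⟩ := by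
      apply Subtype.ext
      simp only [Submodule.coe_add, Submodule.coe_smul]
      rw [hcomp, Int.cast_smul_eq_zsmul ℚ, Int.cast_smul_eq_zsmul ℚ]
    rw [hrepr] at hzero
    rw [map_add, map_zsmul, map_zsmul, zsmul_eq_mul, zsmul_eq_mul] at hzero
    refine hval m hm0 hmN ?_
    push_cast at hzero ⊢
    linear_combination hzero
end S9b
section S9c
variable {V : Type*} [AddCommGroup V] [Module ℚ V] (B : LinearMap.BilinForm ℚ V)

/-- rotation attached to a binary sublattice, parametrised division-free:
`t = 1 + 2A·a₁ = 1 + 2C·a₂`, `s = 2β`. -/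
noncomputable def S9Gfun (u w : V) (a1 b a2 : ℚ) : V →ₗ[ℚ] V :=
  LinearMap.id
    + (a1 • (B u) - b • (B w)).smulRight u
    + (b • (B u) - a2 • (B w)).smulRight w

lemma S9Gfun_apply (u w : V) (a1 b a2 : ℚ) (x : V) :
    S9Gfun B u w a1 b a2 x
      = x + (a1 * B u x - b * B w x) • u + (b * B u x - a2 * B w x) • w := by
  simp [S9Gfun, LinearMap.smulRight_apply, sub_smul, smul_smul]

variable {u w : V} {A C : ℚ}

lemma S9Gzero (x : V) : S9Gfun B u w 0 0 0 x = x := by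
  simp [S9Gfun_apply]

variable (huu : B u u = 2*A) (hww : B w w = -(2*C)) (huw : B u w = 0) (hwu : B w u = 0)

include huu hww huw hwu in
lemma S9Gcomp (a1 b a2 a1' b' a2' : ℚ)
    (h1 : A * a1 = C * a2) (h1' : A * a1' = C * a2') (x : V) :
    S9Gfun B u w a1 b a2 (S9Gfun B u w a1' b' a2' x)
      = S9Gfun B u w (a1 + a1' + 2*A*a1*a1' + 2*C*b*b')
          (b + b' + 2*A*a1*b' + 2*A*b*a1')
          (a2 + a2' + 2*C*a2*a2' + 2*A*b*b') x := by
  simp only [S9Gfun_apply, map_add, map_sub, map_smul, LinearMap.add_apply,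
    LinearMap.sub_apply, LinearMap.smul_apply, smul_eq_mul]
  simp only [huu, hww, huw, hwu]
  match_scalars
  · ring
  · linear_combination (2*b*((B w) x)) * h1'
  · linear_combination (-2*b'*((B u) x)) * h1

include huu hww huw hwu in
lemma S9Giso (hBsymm : ∀ x y : V, B x y = B y x) (a1 b a2 : ℚ)
    (h1 : A * a1 = C * a2) (h2 : a1 + A*a1^2 - C*b^2 = 0)
    (h3 : a2 + C*a2^2 - A*b^2 = 0) (x y : V) :
    B (S9Gfun B u w a1 b a2 x) (S9Gfun B u w a1 b a2 y) = B x y := by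
  simp only [S9Gfun_apply, map_add, map_sub, map_smul, LinearMap.add_apply,
    LinearMap.sub_apply, LinearMap.smul_apply, smul_eq_mul]
  simp only [hBsymm x u, hBsymm x w, huu, hww, huw, hwu]
  linear_combination (2*(B u x)*(B u y)) * h2 + (-2*(B w x)*(B w y)) * h3
    + (2*b*((B w x)*(B u y) + (B u x)*(B w y))) * h1
    - (4*b*((B u) x*(B w) y + (B w) x*(B u) y)) * h1

include huu hwu in
lemma S9Gu (a1 b a2 : ℚ) :
    S9Gfun B u w a1 b a2 u = (1 + 2*A*a1) • u + (2*A*b) • w := by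
  rw [S9Gfun_apply, huu, hwu]
  match_scalars <;> ring

include hww huw in
lemma S9Gw (a1 b a2 : ℚ) :
    S9Gfun B u w a1 b a2 w = (2*C*b) • u + (1 + 2*C*a2) • w := by
  rw [S9Gfun_apply, hww, huw]
  match_scalars <;> ring

end S9c
section S9d
variable {V : Type*} [AddCommGroup V] [Module ℚ V] (B : LinearMap.BilinForm ℚ V)
variable {u w : V} {A C : ℚ}
variable (huu : B u u = 2*A) (hww : B w w = -(2*C)) (huw : B u w = 0) (hwu : B w u = 0)

include huu hww huw hwu in
lemma S9Ginv (a1 b a2 : ℚ) (h1 : A*a1 = C*a2) (h2 : a1 + A*a1^2 - C*b^2 = 0)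
    (h3 : a2 + C*a2^2 - A*b^2 = 0) (x : V) :
    S9Gfun B u w a1 b a2 (S9Gfun B u w a1 (-b) a2 x) = x := by
  rw [S9Gcomp B huu hww huw hwu a1 b a2 a1 (-b) a2 h1 h1]
  have e1 : a1 + a1 + 2*A*a1*a1 + 2*C*b*(-b) = 0 := by linear_combination 2*h2
  have e2 : b + -b + 2*A*a1*(-b) + 2*A*b*a1 = 0 := by ring
  have e3 : a2 + a2 + 2*C*a2*a2 + 2*A*b*(-b) = 0 := by linear_combination 2*h3
  rw [e1, e2, e3, S9Gzero]

noncomputable def S9Geq (a1 b a2 : ℚ) (h1 : A*a1 = C*a2) (h2 : a1 + A*a1^2 - C*b^2 = 0)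
    (h3 : a2 + C*a2^2 - A*b^2 = 0) (huu : B u u = 2*A) (hww : B w w = -(2*C))
    (huw : B u w = 0) (hwu : B w u = 0) : V ≃ₗ[ℚ] V :=
  LinearEquiv.ofLinear (S9Gfun B u w a1 b a2) (S9Gfun B u w a1 (-b) a2)
    (by ext x; exact S9Ginv B huu hww huw hwu a1 b a2 h1 h2 h3 x)
    (by
      ext x
      have := S9Ginv B huu hww huw hwu a1 (-b) a2 h1 (by linear_combination h2)
        (by linear_combination h3) x
      simpa using this)

lemma S9G_sub_mem (hBsymm : ∀ x y : V, B x y = B y x) (S : Submodule ℤ V)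
    (huS : u ∈ S) (hwS : w ∈ S) (a1 b a2 : ℤ) (v : V) (hv : InDual B S v) :
    S9Gfun B u w (a1:ℚ) (b:ℚ) (a2:ℚ) v - v ∈ S := by
  obtain ⟨nu, hnu⟩ := hv u huS
  obtain ⟨nw, hnw⟩ := hv w hwS
  have h1 : B u v = (nu : ℚ) := (hBsymm u v).trans hnu
  have h2 : B w v = (nw : ℚ) := (hBsymm w v).trans hnw
  rw [S9Gfun_apply, h1, h2]
  have key : v + ((a1:ℚ) * nu - b * nw) • u + ((b:ℚ) * nu - a2 * nw) • w - v
      = ((a1*nu - b*nw : ℤ) : ℚ) • u + ((b*nu - a2*nw : ℤ) : ℚ) • w := by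
    push_cast
    match_scalars <;> ring
  rw [key]
  refine S.add_mem ?_ ?_ <;> rw [Int.cast_smul_eq_zsmul] <;>
    exact S.smul_mem _ (by assumption)

lemma S9G_mem_S (hBsymm : ∀ x y : V, B x y = B y x) (S : Submodule ℤ V)
    (hSint : ∀ x ∈ S, ∀ y ∈ S, ∃ n : ℤ, B x y = (n : ℚ))
    (huS : u ∈ S) (hwS : w ∈ S) (a1 b a2 : ℤ) (x : V) (hx : x ∈ S) :
    S9Gfun B u w (a1:ℚ) (b:ℚ) (a2:ℚ) x ∈ S := by
  have hd : InDual B S x := fun y hy => hSint x hx y hy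
  have := S9G_sub_mem B hBsymm S huS hwS a1 b a2 x hd
  have h2 : S9Gfun B u w (a1:ℚ) (b:ℚ) (a2:ℚ) x
      = x + (S9Gfun B u w (a1:ℚ) (b:ℚ) (a2:ℚ) x - x) := by abel
  rw [h2]
  exact S.add_mem hx this

include huu hww huw hwu in
lemma S9G_memOStar (hBsymm : ∀ x y : V, B x y = B y x) (S : Submodule ℤ V)
    (hSint : ∀ x ∈ S, ∀ y ∈ S, ∃ n : ℤ, B x y = (n : ℚ))
    (huS : u ∈ S) (hwS : w ∈ S) (a1 b a2 : ℤ)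
    (h1 : A*(a1:ℚ) = C*(a2:ℚ)) (h2 : (a1:ℚ) + A*(a1:ℚ)^2 - C*(b:ℚ)^2 = 0)
    (h3 : (a2:ℚ) + C*(a2:ℚ)^2 - A*(b:ℚ)^2 = 0) :
    MemOStar B S (S9Geq B (a1:ℚ) (b:ℚ) (a2:ℚ) h1 h2 h3 huu hww huw hwu) := by
  refine ⟨fun x y => S9Giso B huu hww huw hwu hBsymm _ _ _ h1 h2 h3 x y,
    fun x => ⟨?_, ?_⟩, ?_⟩
  · intro hx
    exact S9G_mem_S B hBsymm S hSint huS hwS a1 b a2 x hx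
  · intro hx
    have hx' := S9G_mem_S B hBsymm S hSint huS hwS a1 (-b) a2 _ hx
    have heq : S9Gfun B u w (a1:ℚ) ((-b : ℤ):ℚ) (a2:ℚ)
        (S9Geq B (a1:ℚ) (b:ℚ) (a2:ℚ) h1 h2 h3 huu hww huw hwu x) = x := by
      show S9Gfun B u w (a1:ℚ) ((-b:ℤ):ℚ) (a2:ℚ) (S9Gfun B u w (a1:ℚ) (b:ℚ) (a2:ℚ) x) = x
      push_cast
      have := S9Ginv B huu hww huw hwu (a1:ℚ) (-(b:ℚ)) (a2:ℚ) h1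
        (by linear_combination h2) (by linear_combination h3) x
      simpa using this
    rwa [heq] at hx'
  · intro v hv
    exact S9G_sub_mem B hBsymm S huS hwS a1 b a2 v hv
end S9d
section S9e
/-! Zsqrtd facts: congruences, a fundamental unit congruent to 1, power growth. -/

def S9cong {d : ℤ} (L : ℤ) (z z' : ℤ√d) : Prop :=
  L ∣ (z.re - z'.re) ∧ L ∣ (z.im - z'.im)

lemma S9cong_refl {d L : ℤ} (z : ℤ√d) : S9cong L z z := by
  constructor <;> simp

lemma S9cong_mul {d L : ℤ} {z1 z1' z2 z2' : ℤ√d}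
    (h1 : S9cong L z1 z1') (h2 : S9cong L z2 z2') : S9cong L (z1*z2) (z1'*z2') := by
  obtain ⟨a1, a2⟩ := h1
  obtain ⟨b1, b2⟩ := h2
  constructor
  · have e : (z1*z2).re - (z1'*z2').re
        = z2.re * (z1.re - z1'.re) + z1'.re * (z2.re - z2'.re)
          + d * z2.im * (z1.im - z1'.im) + d * z1'.im * (z2.im - z2'.im) := by
      simp only [Zsqrtd.re_mul]; ring
    rw [e]
    exact dvd_add (dvd_add (dvd_add (a1.mul_left _) (b1.mul_left _))
      (a2.mul_left _)) (b2.mul_left _)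
  · have e : (z1*z2).im - (z1'*z2').im
        = z2.im * (z1.re - z1'.re) + z1'.re * (z2.im - z2'.im)
          + z2'.re * (z1.im - z1'.im) + z1.im * (z2.re - z2'.re) := by
      simp only [Zsqrtd.im_mul]; ring
    rw [e]
    exact dvd_add (dvd_add (dvd_add (a1.mul_left _) (b2.mul_left _))
      (a2.mul_left _)) (b1.mul_left _)

lemma S9cong_pow {d L : ℤ} {z : ℤ√d} (h : S9cong L z 1) (k : ℕ) :
    S9cong L (z^k) 1 := by
  induction k with
  | zero => simpa using S9cong_refl (d := d) 1
  | succ n ih =>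
      have := S9cong_mul ih h
      simpa [pow_succ] using this

lemma S9cong_star {d L : ℤ} {z z' : ℤ√d} (h : S9cong L z z') :
    S9cong L (star z) (star z') := by
  obtain ⟨h1, h2⟩ := h
  refine ⟨by simpa using h1, ?_⟩
  have e : (star z).im - (star z').im = -(z.im - z'.im) := by
    simp only [Zsqrtd.im_star]; ring
  rw [e]
  exact dvd_neg.mpr h2

lemma S9norm_pow {d : ℤ} {z : ℤ√d} (h : z.norm = 1) (k : ℕ) : (z^k).norm = 1 := by
  induction k with
  | zero => simpa using Zsqrtd.norm_one
  | succ n ih => rw [pow_succ, Zsqrtd.norm_mul, ih, h, one_mul]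

lemma S9pow_facts {d : ℤ} (hd : 1 ≤ d) {z : ℤ√d} (h2 : 2 ≤ z.re) (h1 : 1 ≤ z.im) :
    ∀ k : ℕ, 1 ≤ k → 2 ≤ (z^k).re ∧ 1 ≤ (z^k).im
      ∧ (z^k).re ≤ (z.re + d * z.im)^k ∧ (z^k).im ≤ (z.re + d * z.im)^k := by
  intro k hk
  induction k with
  | zero => omega
  | succ n ih =>
      rcases Nat.eq_or_lt_of_le hk with h | h
      · have h' : n = 0 := by omega
        subst h'
        rw [pow_one, pow_one]
        have : 0 ≤ d * z.im := by nlinarith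
        exact ⟨h2, h1, by linarith, by nlinarith⟩
      · have hn : 1 ≤ n := by omega
        obtain ⟨i1, i2, i3, i4⟩ := ih hn
        have hre : (z^(n+1)).re = (z^n).re * z.re + d * ((z^n).im * z.im) := by
          rw [pow_succ, Zsqrtd.re_mul]; ring
        have him : (z^(n+1)).im = (z^n).re * z.im + (z^n).im * z.re := by
          rw [pow_succ, Zsqrtd.im_mul]
        have hKpos : 0 < z.re + d * z.im := by nlinarith
        have hd0 : (0:ℤ) ≤ d := by omega
        have t1 : (2:ℤ)*2 ≤ (z^n).re * z.re := mul_le_mul i1 h2 (by omega) (by omega)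
        have t2 : (0:ℤ) ≤ d * ((z^n).im * z.im) :=
          mul_nonneg hd0 (mul_nonneg (by omega) (by omega))
        have hKn : (0:ℤ) < (z.re + d*z.im)^n := pow_pos hKpos n
        have b1 : (z^n).re * z.re ≤ (z.re + d*z.im)^n * z.re :=
          mul_le_mul_of_nonneg_right i3 (by omega)
        have b2 : (z^n).im * z.im ≤ (z.re + d*z.im)^n * z.im :=
          mul_le_mul_of_nonneg_right i4 (by omega)
        have b2' : d * ((z^n).im * z.im) ≤ d * ((z.re + d*z.im)^n * z.im) :=
          mul_le_mul_of_nonneg_left b2 hd0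
        have b3 : (z^n).re * z.im ≤ (z.re + d*z.im)^n * z.im :=
          mul_le_mul_of_nonneg_right i3 (by omega)
        have b4 : (z^n).im * z.re ≤ (z.re + d*z.im)^n * z.re :=
          mul_le_mul_of_nonneg_right i4 (by omega)
        have hKs : (z.re + d*z.im)^(n+1)
            = (z.re + d*z.im)^n * z.re + d * ((z.re + d*z.im)^n * z.im) := by
          rw [pow_succ]; ring
        have him_nonneg : (0:ℤ) ≤ (z.re+d*z.im)^n * z.im :=
          le_trans (mul_nonneg (by omega) (by omega)) b2
        refine ⟨by rw [hre]; linarith, by rw [him]; nlinarith, ?_, ?_⟩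
        · rw [hre, hKs]; linarith
        · rw [him, hKs]; nlinarith [mul_le_mul_of_nonneg_left b2 hd0]

/-- existence of a Pell unit congruent to 1 mod `L` with positive components -/
lemma S9unit_exists (d L : ℤ) (hd : 2 ≤ d) (hL : 1 ≤ L) (hnsq : ¬ IsSquare d) :
    ∃ Z : ℤ√d, Z.norm = 1 ∧ 2 ≤ Z.re ∧ 1 ≤ Z.im ∧ S9cong L Z 1 := by
  obtain ⟨x, y, hxy, hy⟩ := Pell.exists_of_not_isSquare (by omega) hnsq
  set z1 : ℤ√d := ⟨|x|, |y|⟩ with hz1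
  have hn1 : z1.norm = 1 := by
    rw [Zsqrtd.norm_def]
    have : |x| * |x| = x^2 := by rw [← abs_mul, abs_mul_self]; ring
    have h2 : |y| * |y| = y^2 := by rw [← abs_mul, abs_mul_self]; ring
    rw [this]
    nlinarith [abs_mul_self y]
  have him1 : 1 ≤ z1.im := by
    have h0 := abs_pos.mpr hy
    show (1:ℤ) ≤ |y|
    omega
  have hre1 : 2 ≤ z1.re := by
    have h0 : 0 < y^2 := by positivity
    have hy2 : 1 ≤ y^2 := h0
    have hx2 : 3 ≤ x^2 := by nlinarith
    have habs : 2 ≤ |x| := by nlinarith [sq_abs x, abs_nonneg x]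
    show (2:ℤ) ≤ |x|
    exact habs
  -- pigeonhole modulo L
  have hLnat : L.toNat ≠ 0 := by omega
  haveI : NeZero L.toNat := ⟨hLnat⟩
  have hfin : ∃ k1 k2 : ℕ, k1 ≠ k2 ∧
      (((z1^k1).re : ZMod L.toNat), ((z1^k1).im : ZMod L.toNat))
        = (((z1^k2).re : ZMod L.toNat), ((z1^k2).im : ZMod L.toNat)) := by
    obtain ⟨k1, k2, hne, heq⟩ := Finite.exists_ne_map_eq_of_infinite
      (fun k : ℕ => (((z1^k).re : ZMod L.toNat), ((z1^k).im : ZMod L.toNat)))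
    exact ⟨k1, k2, hne, heq⟩
  obtain ⟨k1, k2, hne, heq⟩ := hfin
  wlog hlt : k1 < k2 generalizing k1 k2
  · exact this k2 k1 (Ne.symm hne) heq.symm (by omega)
  have hdvd : S9cong L (z1^k1) (z1^k2) := by
    have e1 := congrArg Prod.fst heq
    have e2 := congrArg Prod.snd heq
    simp only at e1 e2
    have hcast : (L.toNat : ℤ) = L := by omega
    constructor
    · have := (ZMod.intCast_eq_intCast_iff _ _ _).mp e1
      have := this.dvd
      rw [hcast] at this
      exact (dvd_sub_comm).mp this
    · have := (ZMod.intCast_eq_intCast_iff _ _ _).mp e2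
      have := this.dvd
      rw [hcast] at this
      exact (dvd_sub_comm).mp this
  set m := k2 - k1 with hm
  have hm1 : 1 ≤ m := by omega
  have hsz : star z1 * z1 = 1 := by
    rw [mul_comm, ← Zsqrtd.norm_eq_mul_conj, hn1]
    rfl
  have hsplit : star (z1^k1) * z1^k2 = z1^m := by
    have : z1^k2 = z1^k1 * z1^m := by rw [← pow_add]; congr 1; omega
    rw [this, star_pow, ← mul_assoc, ← mul_pow, hsz, one_pow, one_mul]
  have hcong : S9cong L (z1^m) 1 := by
    have h1 := S9cong_mul (S9cong_refl (star (z1^k1))) hdvd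
    rw [hsplit] at h1
    have h2 : star (z1^k1) * z1^k1 = 1 := by
      rw [star_pow, ← mul_pow, hsz, one_pow]
    rw [h2] at h1
    exact ⟨(dvd_sub_comm).mp h1.1, (dvd_sub_comm).mp h1.2⟩
  obtain ⟨f1, f2, _, _⟩ := S9pow_facts (by omega) hre1 him1 m hm1
  exact ⟨z1^m, S9norm_pow hn1 m, f1, f2, hcong⟩
end S9e
section S9f
variable {V : Type*} [AddCommGroup V] [Module ℚ V] (B : LinearMap.BilinForm ℚ V)

lemma S9_plane_main (hBsymm : ∀ x y : V, B x y = B y x)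
    (S : Submodule ℤ V)
    (hSint : ∀ x ∈ S, ∀ y ∈ S, ∃ n : ℤ, B x y = (n : ℚ))
    (u w : V) (huS : u ∈ S) (hwS : w ∈ S) (A C : ℤ) (hA : 0 < A) (hC : 0 < C)
    (huu : B u u = 2*(A:ℚ)) (hww : B w w = -(2*(C:ℚ))) (huw : B u w = 0)
    (hnsq : ¬ IsSquare (A*C)) (N : ℕ) :
    ∃ Bnd : ℕ, ∀ p : ℕ, p.Prime → Bnd < p →
      ∀ S' : Submodule ℤ V, S' ≤ S → ∀ φ : ↥S →+ ZMod p,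
      (∀ x : ↥S, φ x = 0 ↔ (x : V) ∈ S') →
      (φ ⟨u, huS⟩ ≠ 0 ∨ φ ⟨w, hwS⟩ ≠ 0) →
      ∃ g : Fin (N + 1) → (V ≃ₗ[ℚ] V),
        (∀ i, MemOStar B S (g i)) ∧
        ∀ i j, i ≠ j → ¬ MemOStar B S' ((g i)⁻¹ * (g j)) := by
  have hwu : B w u = 0 := (hBsymm w u).trans huw
  have hAC : 0 < A*C := mul_pos hA hC
  have hd2 : 2 ≤ A*C := by
    rcases eq_or_lt_of_le (by omega : (1:ℤ) ≤ A*C) with h | h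
    · exact absurd (by rw [← h]; exact IsSquare.one) hnsq
    · omega
  obtain ⟨Z, hZn, hZre, hZim, hZc⟩ := S9unit_exists (A*C) (4*A*C) hd2 (by nlinarith) hnsq
  have hnZ : ∀ k : ℕ, (Z^k).re * (Z^k).re - (A*C) * ((Z^k).im * (Z^k).im) = 1 := by
    intro k
    have := S9norm_pow hZn k
    rw [Zsqrtd.norm_def] at this
    linarith
  have hdiv : ∀ k : ℕ, ∃ a1 b a2 : ℤ,
      (Z^k).re = 1 + 2*A*a1 ∧ (Z^k).im = 2*b ∧ (Z^k).re = 1 + 2*C*a2 := by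
    intro k
    obtain ⟨c1, c2⟩ := S9cong_pow hZc k
    rw [Zsqrtd.re_one] at c1
    rw [Zsqrtd.im_one, sub_zero] at c2
    obtain ⟨e1, he1⟩ := c1
    obtain ⟨e2, he2⟩ := c2
    exact ⟨2*C*e1, 2*A*C*e2, 2*A*e1,
      by linear_combination he1, by linear_combination he2, by linear_combination he1⟩
  choose fa1 fb fa2 hs1 hs2 hs3 using hdiv
  have hrel1 : ∀ k : ℕ, (A:ℚ)*((fa1 k : ℤ):ℚ) = (C:ℚ)*((fa2 k : ℤ):ℚ) := by
    intro k
    have hz : (2:ℤ)*(A*fa1 k) = 2*(C*fa2 k) := by linear_combination hs3 k - hs1 k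
    have := mul_left_cancel₀ (by norm_num : (2:ℤ) ≠ 0) hz
    exact_mod_cast this
  have hrel2 : ∀ k : ℕ, ((fa1 k:ℤ):ℚ) + (A:ℚ)*((fa1 k:ℤ):ℚ)^2 - (C:ℚ)*((fb k:ℤ):ℚ)^2 = 0 := by
    intro k
    have h := hnZ k
    rw [hs1 k, hs2 k] at h
    have h4 : (4*A : ℤ) * (fa1 k + A*(fa1 k)^2 - C*(fb k)^2) = 0 := by linear_combination h
    have := (mul_eq_zero.mp h4).resolve_left (by positivity)
    exact_mod_cast this
  have hrel3 : ∀ k : ℕ, ((fa2 k:ℤ):ℚ) + (C:ℚ)*((fa2 k:ℤ):ℚ)^2 - (A:ℚ)*((fb k:ℤ):ℚ)^2 = 0 := by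
    intro k
    have h := hnZ k
    rw [hs3 k, hs2 k] at h
    have h4 : (4*C : ℤ) * (fa2 k + C*(fa2 k)^2 - A*(fb k)^2) = 0 := by linear_combination h
    have := (mul_eq_zero.mp h4).resolve_left (by positivity)
    exact_mod_cast this
  set K : ℤ := Z.re + (A*C)*Z.im with hKd
  have hK2 : 2 ≤ K := by nlinarith
  have hKN : (0:ℤ) < K^N := pow_pos (by omega) N
  refine ⟨(2*K^N).toNat, ?_⟩
  intro p hp hBp S' hS'S φ hker hφ
  haveI : Fact p.Prime := ⟨hp⟩
  have hsZ : star Z * Z = 1 := by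
    have h := Zsqrtd.norm_eq_mul_conj Z
    rw [hZn] at h
    push_cast at h
    linear_combination -h
  refine ⟨fun i => S9Geq B ((fa1 (i:ℕ) : ℤ):ℚ) ((fb (i:ℕ) : ℤ):ℚ) ((fa2 (i:ℕ) : ℤ):ℚ)
      (hrel1 _) (hrel2 _) (hrel3 _) huu hww huw hwu, fun i => ?_, ?_⟩
  · exact S9G_memOStar B huu hww huw hwu hBsymm S hSint huS hwS _ _ _
      (hrel1 _) (hrel2 _) (hrel3 _)
  · intro i j hij hmem
    set ζ : ℤ√(A*C) := star (Z^(i:ℕ)) * Z^(j:ℕ) with hζd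
    have hζre : ζ.re = (Z^(i:ℕ)).re * (Z^(j:ℕ)).re - (A*C) * ((Z^(i:ℕ)).im * (Z^(j:ℕ)).im) := by
      rw [hζd, Zsqrtd.re_mul, Zsqrtd.re_star, Zsqrtd.im_star]; ring
    have hζim : ζ.im = (Z^(i:ℕ)).re * (Z^(j:ℕ)).im - (Z^(i:ℕ)).im * (Z^(j:ℕ)).re := by
      rw [hζd, Zsqrtd.im_mul, Zsqrtd.re_star, Zsqrtd.im_star]; ring
    have hζn : ζ.re*ζ.re - (A*C)*(ζ.im*ζ.im) = 1 := by
      rw [hζre, hζim]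
      have h1 := hnZ (i:ℕ)
      have h2 := hnZ (j:ℕ)
      nlinarith [h1, h2]
    -- composite integer parameters
    set P1 : ℤ := fa1 (i:ℕ) + fa1 (j:ℕ) + 2*A*(fa1 (i:ℕ))*(fa1 (j:ℕ))
        + 2*C*(-(fb (i:ℕ)))*(fb (j:ℕ)) with hP1d
    set PB : ℤ := -(fb (i:ℕ)) + fb (j:ℕ) + 2*A*(fa1 (i:ℕ))*(fb (j:ℕ))
        + 2*A*(-(fb (i:ℕ)))*(fa1 (j:ℕ)) with hPBd
    set P2 : ℤ := fa2 (i:ℕ) + fa2 (j:ℕ) + 2*C*(fa2 (i:ℕ))*(fa2 (j:ℕ))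
        + 2*A*(-(fb (i:ℕ)))*(fb (j:ℕ)) with hP2d
    have e1 : 2*A*P1 = ζ.re - 1 := by
      rw [hζre, hs1 (i:ℕ), hs1 (j:ℕ), hs2 (i:ℕ), hs2 (j:ℕ), hP1d]; ring
    have e2 : 2*PB = ζ.im := by
      rw [hζim, hs1 (i:ℕ), hs1 (j:ℕ), hs2 (i:ℕ), hs2 (j:ℕ), hPBd]; ring
    have e3 : 2*C*P2 = ζ.re - 1 := by
      rw [hζre, hs3 (i:ℕ), hs3 (j:ℕ), hs2 (i:ℕ), hs2 (j:ℕ), hP2d]; ring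
    -- size of ζ.re
    have hζsize : 2 ≤ ζ.re ∧ ζ.re ≤ K^N := by
      rcases lt_or_gt_of_ne (fun h => hij (Fin.ext h) : (i:ℕ) ≠ (j:ℕ)) with hlt | hgt
      · set m : ℕ := (j:ℕ) - (i:ℕ) with hmd
        have hm1 : 1 ≤ m := by omega
        have hmN : m ≤ N := by have := j.isLt; omega
        have hZj : Z^(j:ℕ) = Z^(i:ℕ) * Z^m := by rw [← pow_add]; congr 1; omega
        have hζeq : ζ = Z^m := by
          rw [hζd, hZj, star_pow, ← mul_assoc, ← mul_pow, hsZ, one_pow, one_mul]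
        obtain ⟨f1, _, f3, _⟩ := S9pow_facts (by omega) hZre hZim m hm1
        refine ⟨by rw [hζeq]; exact f1, ?_⟩
        rw [hζeq]
        calc (Z^m).re ≤ K^m := f3
          _ ≤ K^N := pow_le_pow_right₀ (by omega) hmN
      · set m : ℕ := (i:ℕ) - (j:ℕ) with hmd
        have hm1 : 1 ≤ m := by omega
        have hmN : m ≤ N := by have := i.isLt; omega
        have hZi : Z^(i:ℕ) = Z^m * Z^(j:ℕ) := by rw [← pow_add]; congr 1; omega
        have hζeq : ζ = star (Z^m) := by
          rw [hζd, hZi, star_mul]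
          calc star (Z^(j:ℕ)) * star (Z^m) * Z^(j:ℕ)
              = star (Z^m) * (star (Z^(j:ℕ)) * Z^(j:ℕ)) := by ring
            _ = star (Z^m) * 1 := by rw [star_pow Z (j:ℕ), ← mul_pow, hsZ, one_pow]
            _ = star (Z^m) := mul_one _
        obtain ⟨f1, _, f3, _⟩ := S9pow_facts (by omega) hZre hZim m hm1
        refine ⟨by rw [hζeq, Zsqrtd.re_star]; exact f1, ?_⟩
        rw [hζeq, Zsqrtd.re_star]
        calc (Z^m).re ≤ K^m := f3
          _ ≤ K^N := pow_le_pow_right₀ (by omega) hmN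
    obtain ⟨hζ2, hζK⟩ := hζsize
    -- the composite map pointwise
    have hδ : ∀ x : V,
        ((S9Geq B ((fa1 (i:ℕ) : ℤ):ℚ) ((fb (i:ℕ) : ℤ):ℚ) ((fa2 (i:ℕ) : ℤ):ℚ)
            (hrel1 _) (hrel2 _) (hrel3 _) huu hww huw hwu)⁻¹ *
          (S9Geq B ((fa1 (j:ℕ) : ℤ):ℚ) ((fb (j:ℕ) : ℤ):ℚ) ((fa2 (j:ℕ) : ℤ):ℚ)
            (hrel1 _) (hrel2 _) (hrel3 _) huu hww huw hwu)) x
          = S9Gfun B u w (P1:ℚ) (PB:ℚ) (P2:ℚ) x := by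
      intro x
      show S9Gfun B u w ((fa1 (i:ℕ):ℤ):ℚ) (-((fb (i:ℕ):ℤ):ℚ)) ((fa2 (i:ℕ):ℤ):ℚ)
        (S9Gfun B u w ((fa1 (j:ℕ):ℤ):ℚ) ((fb (j:ℕ):ℤ):ℚ) ((fa2 (j:ℕ):ℤ):ℚ) x) = _
      rw [S9Gcomp B huu hww huw hwu _ _ _ _ _ _ (hrel1 _) (hrel1 _)]
      rw [show ((fa1 (i:ℕ):ℤ):ℚ) + ((fa1 (j:ℕ):ℤ):ℚ)
            + 2*(A:ℚ)*((fa1 (i:ℕ):ℤ):ℚ)*((fa1 (j:ℕ):ℤ):ℚ)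
            + 2*(C:ℚ)*(-((fb (i:ℕ):ℤ):ℚ))*((fb (j:ℕ):ℤ):ℚ) = ((P1:ℤ):ℚ) by
          rw [hP1d]; push_cast; ring]
      rw [show (-((fb (i:ℕ):ℤ):ℚ)) + ((fb (j:ℕ):ℤ):ℚ)
            + 2*(A:ℚ)*((fa1 (i:ℕ):ℤ):ℚ)*((fb (j:ℕ):ℤ):ℚ)
            + 2*(A:ℚ)*(-((fb (i:ℕ):ℤ):ℚ))*((fa1 (j:ℕ):ℤ):ℚ) = ((PB:ℤ):ℚ) by
          rw [hPBd]; push_cast; ring]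
      rw [show ((fa2 (i:ℕ):ℤ):ℚ) + ((fa2 (j:ℕ):ℤ):ℚ)
            + 2*(C:ℚ)*((fa2 (i:ℕ):ℤ):ℚ)*((fa2 (j:ℕ):ℤ):ℚ)
            + 2*(A:ℚ)*(-((fb (i:ℕ):ℤ):ℚ))*((fb (j:ℕ):ℤ):ℚ) = ((P2:ℤ):ℚ) by
          rw [hP2d]; push_cast; ring]
    -- extract the two linear equations mod p
    obtain ⟨_, _, h3⟩ := hmem
    have hdu : InDual B S' u := fun y hy => hSint u huS y (hS'S hy)
    have hdw : InDual B S' w := fun y hy => hSint w hwS y (hS'S hy)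
    have hGuU : S9Gfun B u w (P1:ℚ) (PB:ℚ) (P2:ℚ) u - u
        = ((2*A*P1 : ℤ):ℚ) • u + ((2*A*PB : ℤ):ℚ) • w := by
      rw [S9Gu B huu hwu]
      push_cast
      match_scalars <;> ring
    have hGwW : S9Gfun B u w (P1:ℚ) (PB:ℚ) (P2:ℚ) w - w
        = ((2*C*PB : ℤ):ℚ) • u + ((2*C*P2 : ℤ):ℚ) • w := by
      rw [S9Gw B hww huw]
      push_cast
      match_scalars <;> ring
    have hmu : S9Gfun B u w (P1:ℚ) (PB:ℚ) (P2:ℚ) u - u ∈ S := by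
      rw [hGuU]
      refine S.add_mem ?_ ?_ <;> rw [Int.cast_smul_eq_zsmul] <;>
        exact S.smul_mem _ (by assumption)
    have hmw : S9Gfun B u w (P1:ℚ) (PB:ℚ) (P2:ℚ) w - w ∈ S := by
      rw [hGwW]
      refine S.add_mem ?_ ?_ <;> rw [Int.cast_smul_eq_zsmul] <;>
        exact S.smul_mem _ (by assumption)
    have hzu : φ ⟨_, hmu⟩ = 0 := by
      refine (hker _).mpr ?_
      show S9Gfun B u w (P1:ℚ) (PB:ℚ) (P2:ℚ) u - u ∈ S'
      rw [← hδ u]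
      exact h3 u hdu
    have hzw : φ ⟨_, hmw⟩ = 0 := by
      refine (hker _).mpr ?_
      show S9Gfun B u w (P1:ℚ) (PB:ℚ) (P2:ℚ) w - w ∈ S'
      rw [← hδ w]
      exact h3 w hdw
    have hru : (⟨_, hmu⟩ : ↥S) = (2*A*P1) • (⟨u, huS⟩ : ↥S) + (2*A*PB) • ⟨w, hwS⟩ := by
      apply Subtype.ext
      simp only [Submodule.coe_add, Submodule.coe_smul]
      rw [hGuU, Int.cast_smul_eq_zsmul ℚ, Int.cast_smul_eq_zsmul ℚ]
    have hrw : (⟨_, hmw⟩ : ↥S) = (2*C*PB) • (⟨u, huS⟩ : ↥S) + (2*C*P2) • ⟨w, hwS⟩ := by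
      apply Subtype.ext
      simp only [Submodule.coe_add, Submodule.coe_smul]
      rw [hGwW, Int.cast_smul_eq_zsmul ℚ, Int.cast_smul_eq_zsmul ℚ]
    rw [hru] at hzu
    rw [hrw] at hzw
    rw [map_add, map_zsmul, map_zsmul, zsmul_eq_mul, zsmul_eq_mul] at hzu hzw
    set X := φ ⟨u, huS⟩
    set Y := φ ⟨w, hwS⟩
    -- cast the integer identities
    have c1 : ((2*A*P1 : ℤ) : ZMod p) = ((ζ.re - 1 : ℤ) : ZMod p) := by exact_mod_cast congrArg (fun t : ℤ => (t : ZMod p)) e1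
    have c2 : ((2*PB : ℤ) : ZMod p) = ((ζ.im : ℤ) : ZMod p) := by exact_mod_cast congrArg (fun t : ℤ => (t : ZMod p)) e2
    have c3 : ((2*C*P2 : ℤ) : ZMod p) = ((ζ.re - 1 : ℤ) : ZMod p) := by exact_mod_cast congrArg (fun t : ℤ => (t : ZMod p)) e3
    have cn : ((ζ.re*ζ.re - (A*C)*(ζ.im*ζ.im) : ℤ) : ZMod p) = 1 := by
      rw [hζn]; norm_num
    push_cast at hzu hzw c1 c2 c3 cn
    have F1 : ((ζ.re : ℤ):ZMod p)*X - X + (A:ℤ)*((ζ.im:ℤ):ZMod p)*Y = 0 := by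
      push_cast
      linear_combination hzu - X*c1 - (A : ZMod p)*Y*c2
    have F2 : ((ζ.re : ℤ):ZMod p)*Y - Y + (C:ℤ)*((ζ.im:ℤ):ZMod p)*X = 0 := by
      push_cast
      linear_combination hzw - Y*c3 - (C : ZMod p)*X*c2
    have F3 : ((2 - 2*ζ.re : ℤ) : ZMod p) * X = 0 := by
      push_cast
      linear_combination (((ζ.re:ℤ):ZMod p) - 1)*F1 - ((A:ℤ):ZMod p)*((ζ.im:ℤ):ZMod p)*F2 - X*cn
    have F4 : ((2 - 2*ζ.re : ℤ) : ZMod p) * Y = 0 := by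
      push_cast
      linear_combination (((ζ.re:ℤ):ZMod p) - 1)*F2 - ((C:ℤ):ZMod p)*((ζ.im:ℤ):ZMod p)*F1 - Y*cn
    have hcast : ((2*K^N).toNat : ℤ) = 2*K^N := Int.toNat_of_nonneg (by positivity)
    have hplt : (2*K^N : ℤ) < (p:ℤ) := by
      have : ((2*K^N).toNat : ℤ) < (p:ℤ) := by exact_mod_cast hBp
      omega
    have hne : ((2 - 2*ζ.re : ℤ) : ZMod p) ≠ 0 := by
      apply S9_intCast_ne p _ (by omega)
      rw [abs_of_nonpos (by omega)]
      omega
    have hXz : X = 0 := by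
      rcases mul_eq_zero.mp F3 with h | h
      · exact absurd h hne
      · exact h
    have hYz : Y = 0 := by
      rcases mul_eq_zero.mp F4 with h | h
      · exact absurd h hne
      · exact h
    rcases hφ with h | h
    · exact h hXz
    · exact h hYz
end S9f
section S9g
variable {V : Type*} [AddCommGroup V] [Module ℚ V] (B : LinearMap.BilinForm ℚ V)

lemma S9_kill_all (hBsymm : ∀ x y : V, B x y = B y x) (hBnd : LinearMap.SeparatingLeft B)
    (S : Submodule ℤ V)
    (hSint : ∀ x ∈ S, ∀ y ∈ S, ∃ n : ℤ, B x y = (n : ℚ))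
    {ι : Type*} [Fintype ι] [DecidableEq ι] (bb : Module.Basis ι ℚ V)
    (kk : ι → ℤ) (hkk : ∀ i, kk i ≠ 0)
    (ee : ι → V) (hee : ∀ i, ee i = ((kk i : ℤ):ℚ) • bb i)
    (heeS : ∀ i, ee i ∈ S)
    (horth : ∀ i j, i ≠ j → B (ee i) (ee j) = 0)
    (qq : ι → ℤ) (hqq : ∀ i, B (ee i) (ee i) = 2*((qq i : ℤ):ℚ))
    (p : ℕ) (φ : ↥S →+ ZMod p)
    (hall : ∀ i, φ ⟨ee i, heeS i⟩ = 0) :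
    ∀ v : ↥S, (((∏ i, 2*qq i : ℤ)) : ZMod p) * φ v = 0 := by
  rintro ⟨v, hv⟩
  choose nn hnn using fun i => hSint (ee i) (heeS i) v hv
  set tq : ℤ := ∏ i, 2*qq i with htqd
  set coef : ι → ℤ := fun i => nn i * ∏ l ∈ Finset.univ.erase i, (2*qq l) with hcoefd
  set z : V := (tq:ℚ) • v - ∑ i, ((coef i : ℤ):ℚ) • ee i with hzd
  have hBez : ∀ l, B (ee l) z = 0 := by
    intro l
    rw [hzd]
    rw [map_sub, map_smul, map_sum]
    have hterm : ∀ i ∈ Finset.univ, i ≠ l →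
        B (ee l) (((coef i : ℤ):ℚ) • ee i) = 0 := by
      intro i _ hil
      rw [map_smul, smul_eq_mul, horth l i (Ne.symm hil), mul_zero]
    rw [Finset.sum_eq_single l hterm (fun h => absurd (Finset.mem_univ l) h)]
    rw [map_smul]
    simp only [smul_eq_mul, hnn l, hqq l]
    have hprod : (2*qq l) * ∏ l' ∈ Finset.univ.erase l, (2*qq l') = tq := by
      rw [htqd]
      exact Finset.mul_prod_erase Finset.univ (fun l' => 2*qq l') (Finset.mem_univ l)
    have hcast : ((2*qq l : ℤ):ℚ) * ((∏ l' ∈ Finset.univ.erase l, (2*qq l') : ℤ):ℚ)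
        = ((tq : ℤ):ℚ) := by exact_mod_cast congrArg (fun t : ℤ => (t:ℚ)) hprod
    rw [hcoefd]
    push_cast at hcast ⊢
    linear_combination (-(nn l : ℚ)) * hcast
  have hbz : ∀ l, B (bb l) z = 0 := by
    intro l
    have h := hBez l
    rw [hee l, map_smul, LinearMap.smul_apply, smul_eq_mul] at h
    rcases mul_eq_zero.mp h with h' | h'
    · exact absurd h' (by exact_mod_cast hkk l)
    · exact h'
  have hz0 : z = 0 := by
    apply hBnd
    intro y
    rw [hBsymm z y]
    have hfl : B.flip z = 0 := by
      apply bb.ext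
      intro l
      simpa [LinearMap.flip_apply] using hbz l
    have := congrArg (fun f : V →ₗ[ℚ] ℚ => f y) hfl
    simpa [LinearMap.flip_apply] using this
  have hvz : (tq:ℚ) • v = ∑ i, ((coef i : ℤ):ℚ) • ee i := by
    rw [← sub_eq_zero]
    exact hz0
  have hcoe : ((∑ i, (coef i) • (⟨ee i, heeS i⟩ : ↥S) : ↥S) : V)
      = ∑ i, ((coef i : ℤ):ℚ) • ee i := by
    rw [AddSubmonoidClass.coe_finset_sum]
    refine Finset.sum_congr rfl (fun i _ => ?_)
    rw [Submodule.coe_smul, ← Int.cast_smul_eq_zsmul ℚ]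
  have hsum : (tq • (⟨v, hv⟩ : ↥S) : ↥S) = ∑ i, (coef i) • (⟨ee i, heeS i⟩ : ↥S) := by
    apply Subtype.ext
    rw [Submodule.coe_smul, hcoe, ← hvz]
    exact (Int.cast_smul_eq_zsmul ℚ tq v).symm
  calc ((tq:ℤ):ZMod p) * φ ⟨v,hv⟩ = φ (tq • ⟨v,hv⟩) := by rw [map_zsmul, zsmul_eq_mul]
    _ = φ (∑ i, coef i • (⟨ee i, heeS i⟩ : ↥S)) := by rw [hsum]
    _ = ∑ i, coef i • φ (⟨ee i, heeS i⟩ : ↥S) := by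
        rw [map_sum]
        exact Finset.sum_congr rfl (fun i _ => by rw [map_zsmul])
    _ = 0 := Finset.sum_eq_zero (fun i _ => by rw [hall i, smul_zero])
end S9g
section S9h
variable {V : Type*} [AddCommGroup V] [Module ℚ V] (B : LinearMap.BilinForm ℚ V)

lemma S9_phi (S S' : Submodule ℤ V) (p : ℕ)
    (ψ : (↥S ⧸ S'.comap S.subtype) ≃+ ZMod p) :
    ∃ φ : ↥S →+ ZMod p, (∀ x : ↥S, φ x = 0 ↔ (x : V) ∈ S') ∧ ∃ x1 : ↥S, φ x1 = 1 := by
  refine ⟨ψ.toAddMonoidHom.comp ((S'.comap S.subtype).mkQ).toAddMonoidHom,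
    fun x => ?_, ?_⟩
  · show ψ ((S'.comap S.subtype).mkQ x) = 0 ↔ _
    rw [map_eq_zero_iff ψ ψ.injective]
    rw [Submodule.mkQ_apply, Submodule.Quotient.mk_eq_zero, Submodule.mem_comap,
      Submodule.subtype_apply]
  · obtain ⟨q, hq⟩ := ψ.surjective 1
    obtain ⟨x, hx⟩ := Submodule.Quotient.mk_surjective _ q
    refine ⟨x, ?_⟩
    show ψ ((S'.comap S.subtype).mkQ x) = 1
    rw [Submodule.mkQ_apply, hx, hq]
end S9h

/-- Let `S` be an even lattice of signature `(2₊, n₋)`, `n ≥ 1`.  For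
every `N > 0` there is `P` such that for every prime `p ≥ P` and every sublattice
`S' ≤ S` with `S/S' ≅ ℤ/pℤ`, the index of `O(S')*` in `O(S)*` is strictly greater than
`N`: there are `N + 1` elements of `O(S)*` lying in pairwise distinct `O(S')*`-cosets. -/
theorem index_of_stable_group_of_index_p_sublattice_grows
    {V : Type*} [AddCommGroup V] [Module ℚ V]
    (B : LinearMap.BilinForm ℚ V)
    (hBsymm : ∀ x y : V, B x y = B y x) (hBnd : LinearMap.SeparatingLeft B)
    (S : Submodule ℤ V)
    -- `S` is an even lattice of signature `(2, n)` with `n ≥ 1`: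
    (hSfg : S.FG) (hSspan : Submodule.span ℚ (S : Set V) = ⊤)
    (hSint : ∀ x ∈ S, ∀ y ∈ S, ∃ n : ℤ, B x y = (n : ℚ))
    (hSeven : ∀ x ∈ S, ∃ n : ℤ, B x x = 2 * (n : ℚ))
    (n : ℕ) (hn : 1 ≤ n) (hsig : HasSignature B 2 n) :
    ∀ N : ℕ, 0 < N → ∃ P : ℕ, ∀ p : ℕ, p.Prime → P ≤ p →
      ∀ S' : Submodule ℤ V, S' ≤ S →
        Nonempty ((↥S ⧸ S'.comap S.subtype) ≃+ ZMod p) →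
        ∃ g : Fin (N + 1) → (V ≃ₗ[ℚ] V),
          (∀ i, MemOStar B S (g i)) ∧
          ∀ i j, i ≠ j → ¬ MemOStar B S' ((g i)⁻¹ * (g j)) := by
  intro N hN
  obtain ⟨bb, hborth, hbpos, hbneg⟩ := hsig
  haveI : FiniteDimensional ℚ V := Module.Finite.of_basis bb
  choose kk hkk0 hkkS using fun i => S9_exists_zsmul_mem S hSspan (bb i)
  set ee : Fin (2+n) → V := fun i => ((kk i : ℤ):ℚ) • bb i with heed
  have heeS : ∀ i, ee i ∈ S := fun i => hkkS i
  have heeorth : ∀ i j, i ≠ j → B (ee i) (ee j) = 0 := by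
    intro i j hij
    simp only [heed, map_smul, LinearMap.smul_apply, smul_eq_mul, hborth i j hij, mul_zero]
  have heeval : ∀ i, B (ee i) (ee i) = ((kk i:ℤ):ℚ)^2 * B (bb i) (bb i) := by
    intro i
    simp only [heed, map_smul, LinearMap.smul_apply, smul_eq_mul]
    ring
  set Pos := Finset.univ.filter (fun i => 0 < B (bb i) (bb i)) with hPosd
  set Neg := Finset.univ.filter (fun i => B (bb i) (bb i) < 0) with hNegd
  have hPoscard : Pos.card = 2 := hbpos
  have hNegcard : Neg.card = n := hbneg
  have hdisj : Disjoint Pos Neg := by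
    rw [Finset.disjoint_left]
    intro a ha hb
    rw [hPosd, Finset.mem_filter] at ha
    rw [hNegd, Finset.mem_filter] at hb
    exact absurd ha.2 (not_lt.mpr (le_of_lt hb.2))
  have huniv : Pos ∪ Neg = Finset.univ := by
    apply Finset.eq_univ_of_card
    rw [Finset.card_union_of_disjoint hdisj, hPoscard, hNegcard]
    simp
  have hmem_pn : ∀ i, i ∈ Pos ∨ i ∈ Neg := by
    intro i
    have : i ∈ Pos ∪ Neg := huniv ▸ Finset.mem_univ i
    exact Finset.mem_union.mp this
  have hPos_pos : ∀ i ∈ Pos, 0 < B (bb i) (bb i) := by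
    intro i hi; rw [hPosd, Finset.mem_filter] at hi; exact hi.2
  have hNeg_neg : ∀ i ∈ Neg, B (bb i) (bb i) < 0 := by
    intro i hi; rw [hNegd, Finset.mem_filter] at hi; exact hi.2
  choose qq hqq using fun i => hSeven (ee i) (heeS i)
  have hkksq : ∀ i, (0:ℚ) < ((kk i:ℤ):ℚ)^2 := by
    intro i
    have : ((kk i:ℤ):ℚ) ≠ 0 := by exact_mod_cast hkk0 i
    positivity
  have hqpos : ∀ i ∈ Pos, 0 < qq i := by
    intro i hi
    have h1 : (0:ℚ) < B (ee i) (ee i) := by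
      rw [heeval i]; exact mul_pos (hkksq i) (hPos_pos i hi)
    rw [hqq i] at h1
    have : (0:ℚ) < (qq i : ℚ) := by linarith
    exact_mod_cast this
  have hqneg : ∀ i ∈ Neg, qq i < 0 := by
    intro i hi
    have h1 : B (ee i) (ee i) < 0 := by
      rw [heeval i]
      have := hNeg_neg i hi
      nlinarith [hkksq i]
    rw [hqq i] at h1
    have : (qq i : ℚ) < 0 := by linarith
    exact_mod_cast this
  obtain ⟨i1, i2, hi12, hPos2⟩ := Finset.card_eq_two.mp hPoscard
  have hi1P : i1 ∈ Pos := by rw [hPos2]; simp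
  have hi2P : i2 ∈ Pos := by rw [hPos2]; simp
  obtain ⟨j0, hj0⟩ : Neg.Nonempty := by
    rw [← Finset.card_pos, hNegcard]; omega
  -- plane data
  set pu : Fin (2+n) → V := fun i => if i ∈ Neg then ee i1 else ee i with hpud
  set pw : Fin (2+n) → V := fun i => if i ∈ Neg then ee i else ee j0 with hpwd
  set pA : Fin (2+n) → ℤ := fun i => if i ∈ Neg then qq i1 else qq i with hpAd
  set pC : Fin (2+n) → ℤ := fun i => if i ∈ Neg then -(qq i) else -(qq j0) with hpCd
  have hpuS : ∀ i, pu i ∈ S := by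
    intro i; rw [hpud]; by_cases h : i ∈ Neg <;> simp [h] <;> exact heeS _
  have hpwS : ∀ i, pw i ∈ S := by
    intro i; rw [hpwd]; by_cases h : i ∈ Neg <;> simp [h] <;> exact heeS _
  have hpuu : ∀ i, B (pu i) (pu i) = 2*((pA i:ℤ):ℚ) := by
    intro i; rw [hpud, hpAd]; by_cases h : i ∈ Neg <;> simp [h] <;> [exact hqq i1; exact hqq i]
  have hpww : ∀ i, B (pw i) (pw i) = -(2*((pC i:ℤ):ℚ)) := by
    intro i; rw [hpwd, hpCd]
    by_cases h : i ∈ Neg <;> simp [h] <;> [rw [hqq i]; rw [hqq j0]] <;> push_cast <;> ring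
  have hpuw : ∀ i, B (pu i) (pw i) = 0 := by
    intro i; rw [hpud, hpwd]
    by_cases h : i ∈ Neg <;> simp [h]
    · refine heeorth i1 i (fun hc => ?_)
      exact Finset.disjoint_left.mp hdisj (hc ▸ hi1P) h
    · refine heeorth i j0 (fun hc => ?_)
      exact h (hc ▸ hj0)
  have hpApos : ∀ i, 0 < pA i := by
    intro i; rw [hpAd]
    by_cases h : i ∈ Neg <;> simp [h]
    · exact hqpos i1 hi1P
    · exact hqpos i ((hmem_pn i).resolve_right h)
  have hpCpos : ∀ i, 0 < pC i := by
    intro i; rw [hpCd]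
    by_cases h : i ∈ Neg <;> simp [h]
    · exact hqneg i h
    · exact hqneg j0 hj0
  by_cases hsq : ∀ i, ¬ IsSquare (pA i * pC i)
  · -- CASE II : all planes have nonsquare discriminant, use Pell rotations
    have hplanes := fun i => S9_plane_main B hBsymm S hSint (pu i) (pw i)
      (hpuS i) (hpwS i) (pA i) (pC i) (hpApos i) (hpCpos i)
      (hpuu i) (hpww i) (hpuw i) (hsq i) N
    choose Bnd hBndP using hplanes
    set tq : ℤ := ∏ i, 2*qq i with htqd
    have htq0 : tq ≠ 0 := by
      rw [htqd]
      apply Finset.prod_ne_zero_iff.mpr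
      intro i _
      rcases hmem_pn i with h | h
      · have := hqpos i h; omega
      · have := hqneg i h; omega
    refine ⟨(Finset.univ.sup Bnd) + tq.natAbs + 2, ?_⟩
    intro p hp hPle S' hS'S hquot
    obtain ⟨ψ⟩ := hquot
    haveI : Fact p.Prime := ⟨hp⟩
    obtain ⟨φ, hker, x1, hx1⟩ := S9_phi S S' p ψ
    by_cases hall : ∀ i, φ ⟨ee i, heeS i⟩ = 0
    · exfalso
      have hk := S9_kill_all B hBsymm hBnd S hSint bb kk hkk0 ee (fun i => rfl)
        heeS heeorth qq hqq p φ hall x1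
      rw [hx1, mul_one] at hk
      have hlt : |tq| < (p:ℤ) := by
        have h2 : ((tq.natAbs + 2 : ℕ) : ℤ) ≤ (p:ℤ) := by
          exact_mod_cast le_trans
            (by omega : tq.natAbs + 2 ≤ Finset.univ.sup Bnd + tq.natAbs + 2) hPle
        push_cast [Int.natCast_natAbs] at h2
        linarith
      exact S9_intCast_ne p tq htq0 hlt hk
    · push_neg at hall
      obtain ⟨i0, hi0⟩ := hall
      refine hBndP i0 p hp ?_ S' hS'S φ hker ?_
      · have h1 : Bnd i0 ≤ Finset.univ.sup Bnd := Finset.le_sup (Finset.mem_univ i0)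
        omega
      · by_cases hiN : i0 ∈ Neg
        · right
          have hpe : pw i0 = ee i0 := by rw [hpwd]; simp [hiN]
          have : (⟨pw i0, hpwS i0⟩ : ↥S) = ⟨ee i0, heeS i0⟩ := Subtype.ext hpe
          rw [this]
          exact hi0
        · left
          have hpe : pu i0 = ee i0 := by rw [hpud]; simp [hiN]
          have : (⟨pu i0, hpuS i0⟩ : ↥S) = ⟨ee i0, heeS i0⟩ := Subtype.ext hpe
          rw [this]
          exact hi0
  · -- CASE I : some plane has square discriminant, produce an isotropic vector
    push_neg at hsq
    obtain ⟨i0, hsqi⟩ := hsq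
    obtain ⟨r, hr⟩ := hsqi
    obtain ⟨u, hud⟩ : ∃ u, u = pu i0 := ⟨_, rfl⟩
    obtain ⟨w, hwd⟩ : ∃ w, w = pw i0 := ⟨_, rfl⟩
    obtain ⟨A, hAd⟩ : ∃ A, A = pA i0 := ⟨_, rfl⟩
    obtain ⟨C, hCd⟩ : ∃ C, C = pC i0 := ⟨_, rfl⟩
    have hA : 0 < A := by rw [hAd]; exact hpApos i0
    have hC : 0 < C := by rw [hCd]; exact hpCpos i0
    have huS : u ∈ S := by rw [hud]; exact hpuS i0
    have hwS : w ∈ S := by rw [hwd]; exact hpwS i0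
    have huu : B u u = 2*((A:ℤ):ℚ) := by rw [hud, hAd]; exact hpuu i0
    have hww : B w w = -(2*((C:ℤ):ℚ)) := by rw [hwd, hCd]; exact hpww i0
    have huw : B u w = 0 := by rw [hud, hwd]; exact hpuw i0
    have hwu : B w u = 0 := (hBsymm w u).trans huw
    have hr' : A * C = r * r := by rw [hAd, hCd]; exact hr
    have hrQ : ((A:ℤ):ℚ) * ((C:ℤ):ℚ) = ((r:ℤ):ℚ) * ((r:ℤ):ℚ) := by
      exact_mod_cast congrArg (fun t : ℤ => (t:ℚ)) hr'
    obtain ⟨e, hed⟩ : ∃ e : V, e = ((r:ℤ):ℚ) • u + ((A:ℤ):ℚ) • w := ⟨_, rfl⟩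
    have heS : e ∈ S := by
      rw [hed]
      refine S.add_mem ?_ ?_ <;> rw [Int.cast_smul_eq_zsmul] <;>
        exact S.smul_mem _ (by first | exact huS | exact hwS)
    have hee0 : B e e = 0 := by
      rw [hed]
      simp only [map_add, map_smul, LinearMap.add_apply, LinearMap.smul_apply, smul_eq_mul]
      rw [huu, hww, huw, hwu]
      linear_combination (-(2*((A:ℤ):ℚ))) * hrQ
    have he0 : e ≠ 0 := by
      intro h
      have h1 : B e w = -(2*((A:ℤ):ℚ)*((C:ℤ):ℚ)) := by
        rw [hed]
        simp only [map_add, map_smul, LinearMap.add_apply, LinearMap.smul_apply, smul_eq_mul]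
        rw [huw, hww]
        ring
      rw [h, map_zero, LinearMap.zero_apply] at h1
      have hACQ : (0:ℚ) < ((A:ℤ):ℚ) * ((C:ℤ):ℚ) := by
        have : (0:ℤ) < A*C := mul_pos hA hC
        exact_mod_cast this
      linarith
    -- a second isotropic vector pairing nontrivially with e
    obtain ⟨y, hy⟩ : ∃ y, B e y ≠ 0 := by
      by_contra h
      push_neg at h
      exact he0 (hBnd e h)
    obtain ⟨f0, hf0d⟩ : ∃ f0 : V, f0 = y - (B y y / (2 * B e y)) • e := ⟨_, rfl⟩
    have hef0 : B e f0 = B e y := by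
      rw [hf0d, map_sub, map_smul, smul_eq_mul, hee0, mul_zero, sub_zero]
    have hf0e : B f0 e = B e y := (hBsymm f0 e).trans hef0
    have hf00 : B f0 f0 = 0 := by
      rw [hf0d]
      simp only [map_sub, map_smul, LinearMap.sub_apply, LinearMap.smul_apply, smul_eq_mul]
      rw [hBsymm y e, hee0]
      field_simp
      ring
    obtain ⟨kf, hkf0, hkfS⟩ := S9_exists_zsmul_mem S hSspan f0
    obtain ⟨f, hfd⟩ : ∃ f : V, f = ((kf:ℤ):ℚ) • f0 := ⟨_, rfl⟩
    have hfS : f ∈ S := by rw [hfd]; exact hkfS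
    have hff0 : B f f = 0 := by
      rw [hfd]
      simp only [map_smul, LinearMap.smul_apply, smul_eq_mul]
      rw [hf00]
      ring
    have hef : B e f ≠ 0 := by
      rw [hfd, map_smul, smul_eq_mul, hef0]
      have : ((kf:ℤ):ℚ) ≠ 0 := by exact_mod_cast hkf0
      exact mul_ne_zero this hy
    obtain ⟨cI, hcI⟩ := hSint e heS f hfS
    have hcI0 : cI ≠ 0 := by
      intro h
      rw [h] at hcI
      simp at hcI
      exact hef hcI
    -- orthogonal pair in e^⊥ ∩ f^⊥
    obtain ⟨Lm, hLmd⟩ : ∃ Lm : V →ₗ[ℚ] ℚ × ℚ, Lm = (B e).prod (B f) := ⟨_, rfl⟩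
    have hkerfr : 1 ≤ Module.finrank ℚ (LinearMap.ker Lm) := by
      have h1 := LinearMap.finrank_range_add_finrank_ker Lm
      have h2 : Module.finrank ℚ (LinearMap.range Lm) ≤ 2 := by
        have := Submodule.finrank_le (LinearMap.range Lm)
        rwa [Module.finrank_prod, Module.finrank_self] at this
      have h3 : Module.finrank ℚ V = 2 + n := by
        rw [Module.finrank_eq_card_basis bb]
        simp
      omega
    obtain ⟨w0, hw0k, hw00⟩ : ∃ w0 ∈ LinearMap.ker Lm, w0 ≠ 0 := by
      rw [← Submodule.ne_bot_iff]
      intro h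
      rw [h] at hkerfr
      rw [finrank_bot] at hkerfr
      omega
    have hw0e : B e w0 = 0 := by
      have := (LinearMap.mem_ker.mp hw0k)
      have := congrArg Prod.fst this
      simpa [hLmd, LinearMap.prod_apply] using this
    have hw0f : B f w0 = 0 := by
      have := (LinearMap.mem_ker.mp hw0k)
      have := congrArg Prod.snd this
      simpa [hLmd, LinearMap.prod_apply] using this
    obtain ⟨w0', hw0'e, hw0'f, hw0w0'⟩ :
        ∃ w0', B e w0' = 0 ∧ B f w0' = 0 ∧ B w0 w0' ≠ 0 := by
      by_contra h
      push_neg at h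
      apply hw00
      apply hBnd
      intro z
      obtain ⟨z', hz'd⟩ : ∃ z' : V,
          z' = z - (B f z / B e f) • e - (B e z / B e f) • f := ⟨_, rfl⟩
      have hz'e : B e z' = 0 := by
        rw [hz'd]
        simp only [map_sub, map_smul, smul_eq_mul]
        rw [hee0, hcI]
        field_simp
        ring
      have hz'f : B f z' = 0 := by
        rw [hz'd]
        simp only [map_sub, map_smul, smul_eq_mul]
        rw [hff0, (hBsymm f e).trans hcI]
        rw [hcI]
        field_simp
        ring
      have hz'w0 : B w0 z' = 0 := h z' hz'e hz'f
      have hzdec : z = z' + (B f z / B e f) • e + (B e z / B e f) • f := by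
        rw [hz'd]; abel
      have hw0e' : B w0 e = 0 := (hBsymm w0 e).trans hw0e
      have hw0f' : B w0 f = 0 := (hBsymm w0 f).trans hw0f
      rw [hzdec]
      simp only [map_add, map_smul, smul_eq_mul, hz'w0, hw0e', hw0f']
      ring
    obtain ⟨ka, hka0, hkaS⟩ := S9_exists_zsmul_mem S hSspan w0
    obtain ⟨kv, hkv0, hkvS⟩ := S9_exists_zsmul_mem S hSspan w0'
    obtain ⟨a0, ha0d⟩ : ∃ a0 : V, a0 = ((ka:ℤ):ℚ) • w0 := ⟨_, rfl⟩
    obtain ⟨v0, hv0d⟩ : ∃ v0 : V, v0 = ((kv:ℤ):ℚ) • w0' := ⟨_, rfl⟩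
    have ha0S : a0 ∈ S := by rw [ha0d]; exact hkaS
    have hv0S : v0 ∈ S := by rw [hv0d]; exact hkvS
    have hea0 : B e a0 = 0 := by
      rw [ha0d, map_smul, smul_eq_mul, hw0e, mul_zero]
    have hfa0 : B f a0 = 0 := by
      rw [ha0d, map_smul, smul_eq_mul, hw0f, mul_zero]
    have hev0 : B e v0 = 0 := by
      rw [hv0d, map_smul, smul_eq_mul, hw0'e, mul_zero]
    have hfv0 : B f v0 = 0 := by
      rw [hv0d, map_smul, smul_eq_mul, hw0'f, mul_zero]
    obtain ⟨βI, hβI⟩ := hSint a0 ha0S v0 hv0S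
    have hβI0 : βI ≠ 0 := by
      intro h
      rw [h] at hβI
      simp only [Int.cast_zero] at hβI
      apply hw0w0'
      have : B a0 v0 = ((ka:ℤ):ℚ) * (((kv:ℤ):ℚ) * B w0 w0') := by
        rw [ha0d, hv0d]
        simp only [map_smul, LinearMap.smul_apply, smul_eq_mul]
        ring
      rw [hβI] at this
      have hka' : ((ka:ℤ):ℚ) ≠ 0 := by exact_mod_cast hka0
      have hkv' : ((kv:ℤ):ℚ) ≠ 0 := by exact_mod_cast hkv0
      rcases mul_eq_zero.mp this.symm with h' | h'
      · exact absurd h' hka'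
      rcases mul_eq_zero.mp h' with h'' | h''
      · exact absurd h'' hkv'
      · exact h''
    refine ⟨N * (βI.natAbs + cI.natAbs) + cI.natAbs + N + 2, ?_⟩
    intro p hp hPle S' hS'S hquot
    obtain ⟨ψ⟩ := hquot
    haveI : Fact p.Prime := ⟨hp⟩
    obtain ⟨φ, hker, x1, hx1⟩ := S9_phi S S' p ψ
    have hPQ : (N:ℤ) * (|βI| + |cI|) + |cI| + N + 2 ≤ (p:ℤ) := by
      have h1 : ((N * (βI.natAbs + cI.natAbs) + cI.natAbs + N + 2 : ℕ) : ℤ) ≤ (p:ℤ) := by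
        exact_mod_cast hPle
      push_cast [Int.natCast_natAbs] at h1
      linarith
    -- bound lemmas
    have hmβ : ∀ m : ℤ, m ≠ 0 → |m| ≤ (N:ℤ) → ((m * βI : ℤ) : ZMod p) ≠ 0 := by
      intro m hm0 hmN
      apply S9_intCast_ne p _ (mul_ne_zero hm0 hβI0)
      rw [abs_mul]
      have h1 : |m| * |βI| ≤ (N:ℤ) * |βI| :=
        mul_le_mul_of_nonneg_right hmN (abs_nonneg βI)
      have h2 : (0:ℤ) ≤ |cI| := abs_nonneg cI
      have h2' : (0:ℤ) ≤ |βI| := abs_nonneg βI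
      have h3 : (0:ℤ) ≤ (N:ℤ) := by positivity
      have h4 : (0:ℤ) ≤ (N:ℤ)*|cI| := by positivity
      have h4' : (0:ℤ) ≤ (N:ℤ)*|βI| := by positivity
      linarith
    have hmc : ∀ m : ℤ, m ≠ 0 → |m| ≤ (N:ℤ) → ((m * cI : ℤ) : ZMod p) ≠ 0 := by
      intro m hm0 hmN
      apply S9_intCast_ne p _ (mul_ne_zero hm0 hcI0)
      rw [abs_mul]
      have h1 : |m| * |cI| ≤ (N:ℤ) * |cI| :=
        mul_le_mul_of_nonneg_right hmN (abs_nonneg cI)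
      have h2 : (0:ℤ) ≤ |cI| := abs_nonneg cI
      have h2' : (0:ℤ) ≤ |βI| := abs_nonneg βI
      have h3 : (0:ℤ) ≤ (N:ℤ) := by positivity
      have h4 : (0:ℤ) ≤ (N:ℤ)*|cI| := by positivity
      have h4' : (0:ℤ) ≤ (N:ℤ)*|βI| := by positivity
      linarith
    have hcp : ((cI : ℤ) : ZMod p) ≠ 0 := by
      apply S9_intCast_ne p _ hcI0
      have h2 : (0:ℤ) ≤ |βI| := abs_nonneg βI
      have h3 : (0:ℤ) ≤ (N:ℤ) * (|βI| + |cI|) := by positivity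
      have h5 : (0:ℤ) ≤ (N:ℤ) := by positivity
      linarith
    by_cases hφe : φ ⟨e, heS⟩ = 0
    · by_cases hφa : ∃ x : ↥S, B e (x:V) = 0 ∧ φ x ≠ 0
      · -- case B : transvection E_{e, a} detected by f
        obtain ⟨⟨a, haS⟩, hea, hφa0⟩ := hφa
        obtain ⟨tI, htI⟩ := hSint a haS f hfS
        obtain ⟨qI, hqI⟩ := hSeven a haS
        refine S9_eichler_main B hBsymm S hSint hSeven S' hS'S p φ hker N
          e a f heS haS hfS hee0 hea tI cI qI htI hcI hqI ?_
        intro m hm0 hmN h0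
        rw [hφe, mul_zero, zero_sub, neg_eq_zero] at h0
        rcases mul_eq_zero.mp h0 with h' | h'
        · exact hmc m hm0 hmN h'
        · exact hφa0 h'
      · push_neg at hφa
        by_cases hφf : φ ⟨f, hfS⟩ = 0
        · -- impossible : φ would vanish on cI • S
          exfalso
          have hkill : ∀ x : ↥S, ((cI : ℤ) : ZMod p) * φ x = 0 := by
            rintro ⟨v, hv⟩
            obtain ⟨nv, hnv⟩ := hSint e heS v hv
            have hm1 : ((cI:ℤ):ℚ) • v - ((nv:ℤ):ℚ) • f ∈ S := by
              refine S.sub_mem ?_ ?_ <;> rw [Int.cast_smul_eq_zsmul] <;>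
                exact S.smul_mem _ (by assumption)
            have hm1e : B e (((cI:ℤ):ℚ) • v - ((nv:ℤ):ℚ) • f) = 0 := by
              rw [map_sub, map_smul, map_smul, smul_eq_mul, smul_eq_mul, hnv, hcI]
              ring
            have hdec : (cI • (⟨v, hv⟩ : ↥S) : ↥S)
                = ⟨_, hm1⟩ + nv • (⟨f, hfS⟩ : ↥S) := by
              apply Subtype.ext
              push_cast [Submodule.coe_smul]
              rw [← Int.cast_smul_eq_zsmul ℚ cI v, ← Int.cast_smul_eq_zsmul ℚ nv f]
              abel
            have := congrArg φ hdec
            rw [map_zsmul, zsmul_eq_mul, map_add, map_zsmul, hφf, smul_zero, add_zero] at this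
            rw [this, hφa ⟨_, hm1⟩ hm1e]
          have := hkill x1
          rw [hx1, mul_one] at this
          exact hcp this
        · -- case C : transvection E_{f, a0} detected by v0
          obtain ⟨qI, hqI⟩ := hSeven a0 ha0S
          refine S9_eichler_main B hBsymm S hSint hSeven S' hS'S p φ hker N
            f a0 v0 hfS ha0S hv0S hff0 hfa0 βI 0 qI hβI (by rw [hfv0]; simp) hqI ?_
          intro m hm0 hmN h0
          have h1 : ((m * βI : ℤ) : ZMod p) * φ ⟨f, hfS⟩ = 0 := by
            push_cast at h0 ⊢
            linear_combination h0
          rcases mul_eq_zero.mp h1 with h' | h'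
          · exact hmβ m hm0 hmN h'
          · exact hφf h'
    · -- case A : transvection E_{e, a0} detected by v0
      obtain ⟨qI, hqI⟩ := hSeven a0 ha0S
      refine S9_eichler_main B hBsymm S hSint hSeven S' hS'S p φ hker N
        e a0 v0 heS ha0S hv0S hee0 hea0 βI 0 qI hβI (by rw [hev0]; simp) hqI ?_
      intro m hm0 hmN h0
      have h1 : ((m * βI : ℤ) : ZMod p) * φ ⟨e, heS⟩ = 0 := by
        push_cast at h0 ⊢
        linear_combination h0
      rcases mul_eq_zero.mp h1 with h' | h'
      · exact hmβ m hm0 hmN h'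
      · exact hφe h'
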